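/- Fix an integer s ≥ 1 and x ∈ ℝ. Assume δ_{11} > 0, δ_{10} > 0 and δ_{00} > 0, assume the MCAR condition for unit nonresponse: F_A(u | 1,1) = F_A(u | 0,0) and F_B(u | 1,1) = F_B(u | 0,0) for all u ∈ ℝ, and let Y̲^B ∈ ℝ satisfy Y̲^B ≤ Y^B_i for all units i and Y̲^B ≤ x. Then D^s_A(x) = E_A[g_{s,x} | 1,1]·(δ_{11} + δ_{00}) + E_A[g_{s,x} | 1,0]·δ_{10} (point identification of population A's dominance function), and E_B[g_{s,x} | 1,1]·(δ_{11} + δ_{00}) ≤ D^s_B(x) ≤ E_B[g_{s,x} | 1,1]·(δ_{11} + δ_{00}) + ((x − Y̲^B)^{s−1}/(s−1)!)·δ_{10}. (Identification bounds under MCAR for unit nonresponse and the worst case for wave nonresponse, Proposition D.2.) -/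

import Mathlib

open Finset

noncomputable section

/-- Fraction of units in the response class `(a, b)`. -/
def delta {N : ℕ} (ZA ZB : Fin N → Bool) (a b : Bool) : ℝ :=
  ((univ.filter (fun i => ZA i = a ∧ ZB i = b)).card : ℝ) / N

/-- Conditional mean of `g ∘ Y` given the response class `(a, b)`. -/
def condMean {N : ℕ} (Y : Fin N → ℝ) (ZA ZB : Fin N → Bool) (a b : Bool) (g : ℝ → ℝ) : ℝ :=
  (∑ i ∈ univ.filter (fun i => ZA i = a ∧ ZB i = b), g (Y i)) / ((N : ℝ) * delta ZA ZB a b)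

/-- Conditional CDF of `Y` given the response class `(a, b)`. -/
def condCDF' {N : ℕ} (Y : Fin N → ℝ) (ZA ZB : Fin N → Bool) (a b : Bool) (x : ℝ) : ℝ :=
  ((univ.filter (fun i => Y i ≤ x ∧ ZA i = a ∧ ZB i = b)).card : ℝ) / ((N : ℝ) * delta ZA ZB a b)

/-- Population CDF of `Y`. -/
def popCDF {N : ℕ} (Y : Fin N → ℝ) (x : ℝ) : ℝ :=
  ((univ.filter (fun i => Y i ≤ x)).card : ℝ) / N

/-- `s`-th order dominance function of the population `Y`. -/
def domFn {N : ℕ} (Y : Fin N → ℝ) (s : ℕ) (x : ℝ) : ℝ :=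
  (∑ i ∈ univ.filter (fun i => Y i ≤ x), (x - Y i) ^ (s - 1) / ((s - 1).factorial : ℝ)) / N

/-- `g_{s,x}(y) = ((x-y)^{s-1}/(s-1)!) 1[y ≤ x]`. -/
def gfun (s : ℕ) (x : ℝ) : ℝ → ℝ :=
  fun y => ((x - y) ^ (s - 1) / ((s - 1).factorial : ℝ)) * (if y ≤ x then 1 else 0)

namespace MCARAux


variable {N : ℕ}

lemma count_lt_eq (Y : Fin N → ℝ) (S T : Finset (Fin N))
    (hcdf : ∀ u : ℝ, ((S.filter (fun i => Y i ≤ u)).card : ℝ) / S.card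
      = ((T.filter (fun i => Y i ≤ u)).card : ℝ) / T.card) (y : ℝ) :
    ((S.filter (fun i => Y i < y)).card : ℝ) / S.card
      = ((T.filter (fun i => Y i < y)).card : ℝ) / T.card := by
  classical
  by_cases h : ((univ.filter (fun i => Y i < y)).image Y).Nonempty
  · set u0 := ((univ.filter (fun i => Y i < y)).image Y).max' h with hu0
    have hu0lt : u0 < y := by
      have hm := Finset.max'_mem _ h
      rw [← hu0] at hm
      simp only [mem_image, mem_filter] at hm
      obtain ⟨i, ⟨_, hi⟩, hiy⟩ := hm
      rw [← hiy]; exact hi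
    have hiff : ∀ i : Fin N, Y i < y ↔ Y i ≤ u0 := by
      intro i
      constructor
      · intro h'
        exact Finset.le_max' _ _ (mem_image.mpr ⟨i, by simp [h'], rfl⟩)
      · intro h'; exact lt_of_le_of_lt h' hu0lt
    have e1 : S.filter (fun i => Y i < y) = S.filter (fun i => Y i ≤ u0) := by
      apply filter_congr; intro i _; simp [hiff i]
    have e2 : T.filter (fun i => Y i < y) = T.filter (fun i => Y i ≤ u0) := by
      apply filter_congr; intro i _; simp [hiff i]
    rw [e1, e2]; exact hcdf u0
  · have h1 : S.filter (fun i => Y i < y) = ∅ := by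
      rw [filter_eq_empty_iff]; intro i _ hi
      exact h ⟨Y i, mem_image.mpr ⟨i, by simp [hi], rfl⟩⟩
    have h2 : T.filter (fun i => Y i < y) = ∅ := by
      rw [filter_eq_empty_iff]; intro i _ hi
      exact h ⟨Y i, mem_image.mpr ⟨i, by simp [hi], rfl⟩⟩
    simp [h1, h2]

lemma count_eq (Y : Fin N → ℝ) (S T : Finset (Fin N))
    (hcdf : ∀ u : ℝ, ((S.filter (fun i => Y i ≤ u)).card : ℝ) / S.card
      = ((T.filter (fun i => Y i ≤ u)).card : ℝ) / T.card) (y : ℝ) :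
    ((S.filter (fun i => Y i = y)).card : ℝ) / S.card
      = ((T.filter (fun i => Y i = y)).card : ℝ) / T.card := by
  classical
  have key : ∀ U : Finset (Fin N),
      ((U.filter (fun i => Y i ≤ y)).card : ℝ)
        = (U.filter (fun i => Y i < y)).card + (U.filter (fun i => Y i = y)).card := by
    intro U
    have hsplit : U.filter (fun i => Y i ≤ y)
        = U.filter (fun i => Y i < y) ∪ U.filter (fun i => Y i = y) := by
      rw [← filter_or]
      apply filter_congr; intro i _
      simp [le_iff_lt_or_eq]
    have hdisj : Disjoint (U.filter (fun i => Y i < y)) (U.filter (fun i => Y i = y)) := by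
      rw [Finset.disjoint_left]
      intro i h1 h2
      rw [mem_filter] at h1 h2
      exact absurd h2.2 (ne_of_lt h1.2)
    rw [hsplit, card_union_of_disjoint hdisj]
    push_cast; ring
  have h1 := hcdf y
  have h2 := count_lt_eq Y S T hcdf y
  rw [key S, key T] at h1
  rw [add_div, add_div, h2] at h1
  linarith

lemma sum_div_eq (Y : Fin N → ℝ) (S T : Finset (Fin N))
    (hcdf : ∀ u : ℝ, ((S.filter (fun i => Y i ≤ u)).card : ℝ) / S.card
      = ((T.filter (fun i => Y i ≤ u)).card : ℝ) / T.card) (g : ℝ → ℝ) :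
    (∑ i ∈ S, g (Y i)) / S.card = (∑ i ∈ T, g (Y i)) / T.card := by
  classical
  have key : ∀ U : Finset (Fin N), (∑ i ∈ U, g (Y i))
      = ∑ y ∈ univ.image Y, g y * (U.filter (fun i => Y i = y)).card := by
    intro U
    rw [← Finset.sum_fiberwise_of_maps_to (g := Y) (t := univ.image Y)
      (fun i _ => mem_image_of_mem Y (mem_univ i)) (fun i => g (Y i))]
    apply Finset.sum_congr rfl
    intro y _
    have : ∀ i ∈ U.filter (fun i => Y i = y), g (Y i) = g y := by
      intro i hi; rw [mem_filter] at hi; rw [hi.2]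
    rw [Finset.sum_congr rfl this, Finset.sum_const, nsmul_eq_mul, mul_comm]
  rw [key S, key T, Finset.sum_div, Finset.sum_div]
  apply Finset.sum_congr rfl
  intro y _
  rw [mul_div_assoc, mul_div_assoc, count_eq Y S T hcdf y]

end MCARAux

set_option maxHeartbeats 1000000 in
theorem mcar_unit_nonresponse_bounds {N : ℕ} (hN : 1 ≤ N)
    (YA YB : Fin N → ℝ) (ZA ZB : Fin N → Bool)
    (hno : ∀ i, ¬(ZA i = false ∧ ZB i = true))
    (s : ℕ) (hs : 1 ≤ s) (x : ℝ)
    (h11 : 0 < delta ZA ZB true true) (h10 : 0 < delta ZA ZB true false)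
    (h00 : 0 < delta ZA ZB false false)
    (hMCARA : ∀ u : ℝ, condCDF' YA ZA ZB true true u = condCDF' YA ZA ZB false false u)
    (hMCARB : ∀ u : ℝ, condCDF' YB ZA ZB true true u = condCDF' YB ZA ZB false false u)
    (YlB : ℝ) (hYB : ∀ i, YlB ≤ YB i) (hBx : YlB ≤ x) :
    (domFn YA s x =
        condMean YA ZA ZB true true (gfun s x) * (delta ZA ZB true true + delta ZA ZB false false)
        + condMean YA ZA ZB true false (gfun s x) * delta ZA ZB true false) ∧
    (condMean YB ZA ZB true true (gfun s x) * (delta ZA ZB true true + delta ZA ZB false false)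
        ≤ domFn YB s x ∧
      domFn YB s x ≤
        condMean YB ZA ZB true true (gfun s x) * (delta ZA ZB true true + delta ZA ZB false false)
        + ((x - YlB) ^ (s - 1) / ((s - 1).factorial : ℝ)) * delta ZA ZB true false) := by
  set g := gfun s x with hg
  have hNpos : (0 : ℝ) < N := by exact_mod_cast hN
  have hNne : (N : ℝ) ≠ 0 := ne_of_gt hNpos
  set S11 := univ.filter (fun i : Fin N => ZA i = true ∧ ZB i = true) with hS11
  set S10 := univ.filter (fun i : Fin N => ZA i = true ∧ ZB i = false) with hS10
  set S00 := univ.filter (fun i : Fin N => ZA i = false ∧ ZB i = false) with hS00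
  -- card facts
  have hcard : ∀ a b : Bool, ((univ.filter (fun i : Fin N => ZA i = a ∧ ZB i = b)).card : ℝ)
      = N * delta ZA ZB a b := by
    intro a b; rw [delta]; field_simp
  have hc11 : (0 : ℝ) < (S11.card : ℝ) := by rw [hS11, hcard]; positivity
  have hc10 : (0 : ℝ) < (S10.card : ℝ) := by rw [hS10, hcard]; positivity
  have hc00 : (0 : ℝ) < (S00.card : ℝ) := by rw [hS00, hcard]; positivity
  -- condMean * delta = (class sum)/N
  have hsum : ∀ (Y : Fin N → ℝ) (a b : Bool), 0 < delta ZA ZB a b →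
      condMean Y ZA ZB a b g * delta ZA ZB a b
        = (∑ i ∈ univ.filter (fun i : Fin N => ZA i = a ∧ ZB i = b), g (Y i)) / N := by
    intro Y a b hd
    rw [condMean]
    have hdne : delta ZA ZB a b ≠ 0 := ne_of_gt hd
    field_simp
  -- condCDF' rewriting
  have hcdf : ∀ (Y : Fin N → ℝ) (a b : Bool) (u : ℝ), condCDF' Y ZA ZB a b u
      = (((univ.filter (fun i : Fin N => ZA i = a ∧ ZB i = b)).filter
          (fun i => Y i ≤ u)).card : ℝ)
        / ((univ.filter (fun i : Fin N => ZA i = a ∧ ZB i = b)).card : ℝ) := by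
    intro Y a b u
    have hset : univ.filter (fun i : Fin N => Y i ≤ u ∧ ZA i = a ∧ ZB i = b)
        = (univ.filter (fun i : Fin N => ZA i = a ∧ ZB i = b)).filter (fun i => Y i ≤ u) := by
      ext i
      simp only [mem_filter, mem_univ, true_and]
      tauto
    rw [condCDF', hset, hcard]
  -- MCAR ⇒ equal conditional means
  have hmcar : ∀ (Y : Fin N → ℝ),
      (∀ u : ℝ, condCDF' Y ZA ZB true true u = condCDF' Y ZA ZB false false u) →
      condMean Y ZA ZB false false g = condMean Y ZA ZB true true g := by
    intro Y hM
    have key := MCARAux.sum_div_eq Y S11 S00 (fun u => by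
      have h := hM u
      rw [hcdf Y true true u, hcdf Y false false u] at h
      exact h) g
    rw [condMean, condMean, ← hcard true true, ← hcard false false, ← hS11, ← hS00]
    exact key.symm
  -- splitting the population sum
  have hsplit : ∀ (Y : Fin N → ℝ),
      ∑ i ∈ (univ : Finset (Fin N)), g (Y i)
        = (∑ i ∈ S11, g (Y i)) + (∑ i ∈ S10, g (Y i)) + (∑ i ∈ S00, g (Y i)) := by
    intro Y
    have hU : (univ : Finset (Fin N)) = (S11 ∪ S10) ∪ S00 := by
      ext i
      constructor
      · intro _
        simp only [hS11, hS10, hS00, mem_union, mem_filter, mem_univ, true_and]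
        cases hZA : ZA i <;> cases hZB : ZB i
        · right; exact ⟨rfl, rfl⟩
        · exact absurd ⟨hZA, hZB⟩ (hno i)
        · left; right; exact ⟨rfl, rfl⟩
        · left; left; exact ⟨rfl, rfl⟩
      · intro _; exact mem_univ i
    have hd1 : Disjoint S11 S10 := by
      rw [Finset.disjoint_left]; intro i h1 h2
      rw [hS11, mem_filter] at h1; rw [hS10, mem_filter] at h2
      exact absurd (h1.2.2.symm.trans h2.2.2) (by simp)
    have hd2 : Disjoint (S11 ∪ S10) S00 := by
      rw [Finset.disjoint_left]; intro i h1 h2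
      rw [hS00, mem_filter] at h2
      rcases mem_union.mp h1 with h1 | h1
      · rw [hS11, mem_filter] at h1
        exact absurd (h1.2.1.symm.trans h2.2.1) (by simp)
      · rw [hS10, mem_filter] at h1
        exact absurd (h1.2.1.symm.trans h2.2.1) (by simp)
    rw [hU, Finset.sum_union hd2, Finset.sum_union hd1]
  -- domFn as full-population average of g
  have hdom : ∀ (Y : Fin N → ℝ), domFn Y s x
      = (∑ i ∈ (univ : Finset (Fin N)), g (Y i)) / N := by
    intro Y
    rw [domFn]
    congr 1
    rw [Finset.sum_filter]
    apply Finset.sum_congr rfl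
    intro i _
    by_cases h : Y i ≤ x <;> simp [hg, gfun, h]
  -- main decomposition identity
  have hmain : ∀ (Y : Fin N → ℝ),
      (∀ u : ℝ, condCDF' Y ZA ZB true true u = condCDF' Y ZA ZB false false u) →
      domFn Y s x = condMean Y ZA ZB true true g
          * (delta ZA ZB true true + delta ZA ZB false false)
        + condMean Y ZA ZB true false g * delta ZA ZB true false := by
    intro Y hM
    have e11 := hsum Y true true h11
    have e10 := hsum Y true false h10
    have e00 := hsum Y false false h00
    rw [← hS11] at e11; rw [← hS10] at e10; rw [← hS00] at e00
    rw [hmcar Y hM] at e00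
    rw [hdom Y, hsplit Y, add_div, add_div, ← e11, ← e10, ← e00]
    ring
  have hgnn : ∀ y : ℝ, 0 ≤ g y := by
    intro y
    rw [hg, gfun]
    by_cases h : y ≤ x
    · simp only [h, if_true, mul_one]
      apply div_nonneg _ (Nat.cast_nonneg _)
      exact pow_nonneg (by linarith) _
    · simp [h]
  have hC : 0 ≤ (x - YlB) ^ (s - 1) / ((s - 1).factorial : ℝ) := by
    apply div_nonneg _ (Nat.cast_nonneg _)
    exact pow_nonneg (by linarith) _
  refine ⟨hmain YA hMCARA, ?_, ?_⟩
  · rw [hmain YB hMCARB]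
    have hnn : 0 ≤ condMean YB ZA ZB true false g * delta ZA ZB true false := by
      rw [hsum YB true false h10]
      apply div_nonneg _ (le_of_lt hNpos)
      exact Finset.sum_nonneg (fun i _ => hgnn (YB i))
    linarith
  · rw [hmain YB hMCARB]
    have hbd : condMean YB ZA ZB true false g * delta ZA ZB true false
        ≤ ((x - YlB) ^ (s - 1) / ((s - 1).factorial : ℝ)) * delta ZA ZB true false := by
      rw [hsum YB true false h10, ← hS10]
      have hterm : ∀ i ∈ S10, g (YB i) ≤ (x - YlB) ^ (s - 1) / ((s - 1).factorial : ℝ) := by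
        intro i _
        rw [hg, gfun]
        by_cases h : YB i ≤ x
        · simp only [h, if_true, mul_one]
          gcongr
          · linarith [hYB i]
        · simp only [h, if_false, mul_zero]
          exact hC
      have hsb : (∑ i ∈ S10, g (YB i))
          ≤ (S10.card : ℝ) * ((x - YlB) ^ (s - 1) / ((s - 1).factorial : ℝ)) := by
        calc (∑ i ∈ S10, g (YB i))
            ≤ ∑ _i ∈ S10, (x - YlB) ^ (s - 1) / ((s - 1).factorial : ℝ) :=
              Finset.sum_le_sum hterm
          _ = _ := by rw [Finset.sum_const, nsmul_eq_mul]
      have hdelta10 : delta ZA ZB true false = (S10.card : ℝ) / N := by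
        rw [hS10, hcard]; field_simp
      rw [hdelta10, ← mul_div_assoc]
      exact (div_le_div_iff_of_pos_right hNpos).mpr (by linarith [hsb])
    linarith
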